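/- Let (Γ, ⪯) be a left-ordered group and let (f, g, u, v, w) be a crossing for (Γ, ⪯). If f u ≻ u (resp. f u ≺ u), then (f, g, f^n u, v, w) (resp. (f, g, f^{-n} u, v, w)) is also a crossing for every positive integer n. Analogously, if g v ≺ v (resp. g v ≻ v), then (f, g, u, g^n v, w) (resp. (f, g, u, g^{-n} v, w)) is also a crossing for every positive integer n. -/

import Mathlib

/-- A crossing for a left-ordered group `(Γ, ≤)`. -/
def IsCrossing {Γ : Type*} [Group Γ] [LinearOrder Γ] (f g u v w : Γ) : Prop :=
  u < w ∧ w < v ∧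
  (∀ n : ℕ, 0 < n → g ^ n * u < v ∧ u < f ^ n * v) ∧
  ∃ M N : ℕ, 0 < M ∧ 0 < N ∧ f ^ N * v < w ∧ w < g ^ M * u

/-- Let `(f, g, u, v, w)` be a crossing. If `f u > u` (resp. `f u < u`), then
`(f, g, fⁿ u, v, w)` (resp. `(f, g, f⁻ⁿ u, v, w)`) is also a crossing for every
positive integer `n`. Analogously, if `g v < v` (resp. `g v > v`), then
`(f, g, u, gⁿ v, w)` (resp. `(f, g, u, g⁻ⁿ v, w)`) is also a crossing for every
positive integer `n`. -/
theorem crossing_translate_u_v {Γ : Type*} [Group Γ] [LinearOrder Γ]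
    [CovariantClass Γ Γ (· * ·) (· ≤ ·)] (f g u v w : Γ)
    (h : IsCrossing f g u v w) :
    (u < f * u → ∀ n : ℕ, 0 < n → IsCrossing f g (f ^ n * u) v w) ∧
    (f * u < u → ∀ n : ℕ, 0 < n → IsCrossing f g (f ^ (-(n : ℤ)) * u) v w) ∧
    (g * v < v → ∀ n : ℕ, 0 < n → IsCrossing f g u (g ^ n * v) w) ∧
    (v < g * v → ∀ n : ℕ, 0 < n → IsCrossing f g u (g ^ (-(n : ℤ)) * v) w) := by
  haveI : CovariantClass Γ Γ (· * ·) (· < ·) :=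
    ⟨fun a b c hbc => by
      rcases lt_or_eq_of_le (mul_le_mul_right hbc.le a) with h' | h'
      · exact h'
      · exact absurd (mul_left_cancel h') hbc.ne⟩
  obtain ⟨huw, hwv, hmain, M, N, hM, hN, hfNv, hwgMu⟩ := h
  -- g^k * w < v for all k
  have L1' : ∀ k : ℕ, g ^ k * w < v := by
    intro k
    rcases Nat.eq_zero_or_pos k with rfl | hk
    · simpa using hwv
    · have h1 : g ^ k * w < g ^ (k + M) * u := by
        have h2 := mul_lt_mul_right hwgMu (g ^ k)
        rwa [← mul_assoc, ← pow_add] at h2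
      exact h1.trans (hmain (k + M) (by omega)).1
  -- u < f^k * w for positive k
  have L2 : ∀ k : ℕ, 0 < k → u < f ^ k * w := by
    intro k hk
    have h1 : u < f ^ (k + N) * v := (hmain (k + N) (by omega)).2
    have h2 : f ^ (k + N) * v < f ^ k * w := by
      have h3 := mul_lt_mul_right hfNv (f ^ k)
      rwa [← mul_assoc, ← pow_add] at h3
    exact h1.trans h2
  refine ⟨?_, ?_, ?_, ?_⟩
  · -- Case 1 : u < f * u
    intro hu n hn
    have hmono : Monotone fun j : ℕ => f ^ j * u := by
      apply monotone_nat_of_le_succ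
      intro j
      have h1 := mul_lt_mul_right hu (f ^ j)
      rw [← mul_assoc, ← pow_succ] at h1
      exact h1.le
    have hw1 : f ^ N * w < w := (mul_lt_mul_right hwv (f ^ N)).trans hfNv
    have hwNt : ∀ t : ℕ, f ^ ((t + 1) * N) * w < w := by
      intro t
      induction t with
      | zero => simpa using hw1
      | succ t ih =>
        have h1 := mul_lt_mul_right ih (f ^ N)
        rw [← mul_assoc, ← pow_add] at h1
        have h2 : N + (t + 1) * N = (t + 1 + 1) * N := by ring
        rw [h2] at h1
        exact h1.trans hw1
    have C : ∀ m : ℕ, f ^ m * u < w := by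
      intro m
      have hge : m ≤ (m + 1) * N := by nlinarith
      have h1 : f ^ m * u ≤ f ^ ((m + 1) * N) * u := hmono hge
      exact h1.trans_lt ((mul_lt_mul_right huw (f ^ ((m + 1) * N))).trans (hwNt m))
    refine ⟨C n, hwv, ?_, M, N, hM, hN, hfNv, ?_⟩
    · intro k hk
      constructor
      · exact (mul_lt_mul_right (C n) (g ^ k)).trans (L1' k)
      · rcases le_or_gt k n with hkn | hnk
        · have h1 : f ^ (n - k) * u < v := (C (n - k)).trans hwv
          have h2 := mul_lt_mul_right h1 (f ^ k)
          rwa [← mul_assoc, ← pow_add, Nat.add_sub_cancel' hkn] at h2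
        · have h1 := (hmain (k - n) (by omega)).2
          have h2 := mul_lt_mul_right h1 (f ^ n)
          rwa [← mul_assoc, ← pow_add, Nat.add_sub_cancel' hnk.le] at h2
    · have h1 : u < f ^ n * u := by
        calc u < f ^ 1 * u := by rwa [pow_one]
          _ ≤ f ^ n * u := hmono hn
      exact hwgMu.trans (mul_lt_mul_right h1 (g ^ M))
  · -- Case 2 : f * u < u
    intro hu n hn
    have hz : f ^ (-(n : ℤ)) = (f ^ n)⁻¹ := by rw [zpow_neg, zpow_natCast]
    rw [hz]
    have hanti : Antitone fun j : ℕ => f ^ j * u := by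
      apply antitone_nat_of_succ_le
      intro j
      have h1 := mul_lt_mul_right hu (f ^ j)
      rw [← mul_assoc, ← pow_succ] at h1
      exact h1.le
    have hfnu : f ^ n * u < u := by
      calc f ^ n * u ≤ f ^ 1 * u := hanti hn
        _ < u := by rwa [pow_one]
    have hu' : u < (f ^ n)⁻¹ * u := by
      have h1 := mul_lt_mul_right hfnu (f ^ n)⁻¹
      rwa [inv_mul_cancel_left] at h1
    have uk : ∀ k : ℕ, 0 < k → (f ^ n)⁻¹ * u < f ^ k * v := by
      intro k hk
      have h1 := (hmain (n + k) (by omega)).2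
      rw [pow_add, mul_assoc] at h1
      have h2 := mul_lt_mul_right h1 (f ^ n)⁻¹
      rwa [inv_mul_cancel_left] at h2
    have hu'w : (f ^ n)⁻¹ * u < w := by
      have h1 := (hmain (n + N) (by omega)).2
      rw [pow_add, mul_assoc] at h1
      have h2 := mul_lt_mul_right h1 (f ^ n)⁻¹
      rw [inv_mul_cancel_left] at h2
      exact h2.trans hfNv
    refine ⟨hu'w, hwv, ?_, M, N, hM, hN, hfNv, ?_⟩
    · intro k hk
      exact ⟨(mul_lt_mul_right hu'w (g ^ k)).trans (L1' k), uk k hk⟩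
    · exact hwgMu.trans (mul_lt_mul_right hu' (g ^ M))
  · -- Case 3 : g * v < v
    intro hg n hn
    have hanti : Antitone fun j : ℕ => g ^ j * v := by
      apply antitone_nat_of_succ_le
      intro j
      have h1 := mul_lt_mul_right hg (g ^ j)
      rw [← mul_assoc, ← pow_succ] at h1
      exact h1.le
    have hgv1 : g ^ n * v < v := by
      calc g ^ n * v ≤ g ^ 1 * v := hanti hn
        _ < v := by rwa [pow_one]
    have L4 : ∀ t : ℕ, w < g ^ ((t + 1) * M) * u := by
      intro t
      induction t with
      | zero => simpa using hwgMu
      | succ t ih =>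
        have h1 := mul_lt_mul_right ih (g ^ M)
        rw [← mul_assoc, ← pow_add] at h1
        have h2 : M + (t + 1) * M = (t + 1 + 1) * M := by ring
        rw [h2] at h1
        have h3 : w < g ^ M * w := hwgMu.trans (mul_lt_mul_right huw _)
        exact h3.trans h1
    have L5 : ∀ j : ℕ, w < g ^ j * v := by
      intro j
      have h1 := L4 j
      have hge : j + 1 ≤ (j + 1) * M := by nlinarith
      have hm : 0 < (j + 1) * M - j := by omega
      have h2 : (j + 1) * M = j + ((j + 1) * M - j) := by omega
      rw [h2, pow_add, mul_assoc] at h1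
      exact h1.trans (mul_lt_mul_right (hmain _ hm).1 (g ^ j))
    refine ⟨huw, L5 n, ?_, M, N, hM, hN, ?_, hwgMu⟩
    · intro k hk
      constructor
      · rcases le_or_gt k n with hkn | hnk
        · have h1 : g ^ k * u < g ^ k * w := mul_lt_mul_right huw _
          have h2 := mul_lt_mul_right (L5 (n - k)) (g ^ k)
          rw [← mul_assoc, ← pow_add, Nat.add_sub_cancel' hkn] at h2
          exact h1.trans h2
        · have h1 := (hmain (k - n) (by omega)).1
          have h2 := mul_lt_mul_right h1 (g ^ n)
          rwa [← mul_assoc, ← pow_add, Nat.add_sub_cancel' hnk.le] at h2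
      · exact (L2 k hk).trans (mul_lt_mul_right (L5 n) (f ^ k))
    · exact (mul_lt_mul_right hgv1 (f ^ N)).trans hfNv
  · -- Case 4 : v < g * v
    intro hg n hn
    have hz : g ^ (-(n : ℤ)) = (g ^ n)⁻¹ := by rw [zpow_neg, zpow_natCast]
    rw [hz]
    have hg1 : g⁻¹ * v < v := by
      have h1 := mul_lt_mul_right hg g⁻¹
      rwa [inv_mul_cancel_left] at h1
    have hanti : Antitone fun j : ℕ => (g⁻¹) ^ j * v := by
      apply antitone_nat_of_succ_le
      intro j
      have h1 := mul_lt_mul_right hg1 ((g⁻¹) ^ j)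
      rw [← mul_assoc, ← pow_succ] at h1
      exact h1.le
    have hx_lt_v : (g ^ n)⁻¹ * v < v := by
      have h1 : (g⁻¹) ^ n * v < v := by
        calc (g⁻¹) ^ n * v ≤ (g⁻¹) ^ 1 * v := hanti hn
          _ < v := by rwa [pow_one]
      rwa [inv_pow] at h1
    have hw_lt_x : w < (g ^ n)⁻¹ * v := by
      have h1 := mul_lt_mul_right (L1' n) (g ^ n)⁻¹
      rwa [inv_mul_cancel_left] at h1
    refine ⟨huw, hw_lt_x, ?_, M, N, hM, hN, ?_, hwgMu⟩
    · intro k hk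
      constructor
      · have h1 := (hmain (n + k) (by omega)).1
        rw [pow_add, mul_assoc] at h1
        have h2 := mul_lt_mul_right h1 (g ^ n)⁻¹
        rwa [inv_mul_cancel_left] at h2
      · exact (L2 k hk).trans (mul_lt_mul_right hw_lt_x (f ^ k))
    · exact (mul_lt_mul_right hx_lt_v (f ^ N)).trans hfNv
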